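/- Let X be a ball Banach function space on ℝ^n and let f ∈ X. Suppose there is a constant C > 0 such that for every g ∈ L^1(ℝ^n) the convolution f*g belongs to X and ‖f*g‖_X ≤ C‖f‖_X‖g‖_{L^1}. Then there is a constant C' > 0 (depending only on C and the implied constants of X) such that for every z ∈ ℝ^n the translate f(·−z) belongs to X and ‖f(·−z)‖_X ≤ C'‖f‖_X. -/

import Mathlib

open MeasureTheory Filter ENNReal

noncomputable section

/-- ℝⁿ as a Euclidean space. -/
abbrev Rn (n : ℕ) := EuclideanSpace ℝ (Fin n)

/-- A Banach space `X` contained in `L⁰(ℝⁿ)`: a collection of (a.e. equivalence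
classes of) measurable functions on `ℝⁿ`, with a complete norm. -/
structure BanachInL0 (n : ℕ) where
  carrier : Set (Rn n → ℝ)
  norm : (Rn n → ℝ) → ℝ
  mem_congr : ∀ {f g : Rn n → ℝ}, f =ᵐ[volume] g → f ∈ carrier → g ∈ carrier
  norm_congr : ∀ {f g : Rn n → ℝ}, f =ᵐ[volume] g → norm f = norm g
  aemeasurable : ∀ {f : Rn n → ℝ}, f ∈ carrier → AEMeasurable f volume
  zero_mem : (0 : Rn n → ℝ) ∈ carrier
  add_mem : ∀ {f g : Rn n → ℝ}, f ∈ carrier → g ∈ carrier → f + g ∈ carrier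
  smul_mem : ∀ (c : ℝ) {f : Rn n → ℝ}, f ∈ carrier → c • f ∈ carrier
  norm_nonneg : ∀ f : Rn n → ℝ, 0 ≤ norm f
  norm_eq_zero : ∀ {f : Rn n → ℝ}, f ∈ carrier → norm f = 0 → f =ᵐ[volume] (0 : Rn n → ℝ)
  norm_zero : norm 0 = 0
  norm_add_le : ∀ {f g : Rn n → ℝ}, f ∈ carrier → g ∈ carrier → norm (f + g) ≤ norm f + norm g
  norm_smul : ∀ (c : ℝ) (f : Rn n → ℝ), norm (c • f) = |c| * norm f
  complete : ∀ F : ℕ → Rn n → ℝ, (∀ k, F k ∈ carrier) →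
    (∀ ε : ℝ, 0 < ε → ∃ N : ℕ, ∀ k l, N ≤ k → N ≤ l → norm (F k - F l) < ε) →
    ∃ g ∈ carrier, Tendsto (fun k => norm (F k - g)) atTop (nhds 0)

namespace BanachInL0

variable {n : ℕ}

/-- The lattice property (L). -/
def PropL (X : BanachInL0 n) : Prop :=
  ∀ f g : Rn n → ℝ, f ∈ X.carrier → AEMeasurable g volume →
    (∀ᵐ x ∂volume, |g x| ≤ |f x|) → g ∈ X.carrier ∧ X.norm g ≤ X.norm f

/-- The Fatou property (F). -/
def PropF (X : BanachInL0 n) : Prop :=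
  ∀ (F : ℕ → Rn n → ℝ) (f : Rn n → ℝ), (∀ k, F k ∈ X.carrier) → AEMeasurable f volume →
    (∀ᵐ x ∂volume, (∀ k, 0 ≤ F k x) ∧ Monotone (fun k => F k x) ∧
      Tendsto (fun k => F k x) atTop (nhds (f x))) →
    BddAbove (Set.range fun k => X.norm (F k)) →
    f ∈ X.carrier ∧ X.norm f = ⨆ k, X.norm (F k)

/-- The saturation property (Sa). -/
def PropSa (X : BanachInL0 n) : Prop :=
  ∀ E : Set (Rn n), MeasurableSet E → 0 < volume E →
    ∃ F : Set (Rn n), MeasurableSet F ∧ F ⊆ E ∧ 0 < volume F ∧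
      F.indicator (fun _ => (1 : ℝ)) ∈ X.carrier

/-- Property (BSi): the indicator of every ball belongs to `X`. -/
def PropBSi (X : BanachInL0 n) : Prop :=
  ∀ (c : Rn n) (r : ℝ), 0 < r →
    (Metric.ball c r).indicator (fun _ => (1 : ℝ)) ∈ X.carrier

/-- Property (BLI): functions in `X` are locally integrable, uniformly on each ball. -/
def PropBLI (X : BanachInL0 n) : Prop :=
  ∀ (c : Rn n) (r : ℝ), 0 < r → ∃ C : ℝ, ∀ f ∈ X.carrier,
    ∫⁻ y in Metric.ball c r, ENNReal.ofReal |f y| ≤ ENNReal.ofReal (C * X.norm f)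

/-- Property (Si): the indicator of every set of finite measure belongs to `X`. -/
def PropSi (X : BanachInL0 n) : Prop :=
  ∀ E : Set (Rn n), MeasurableSet E → volume E < ∞ →
    E.indicator (fun _ => (1 : ℝ)) ∈ X.carrier

/-- Property (LI): functions in `X` are integrable on sets of finite measure,
uniformly on each such set. -/
def PropLI (X : BanachInL0 n) : Prop :=
  ∀ E : Set (Rn n), MeasurableSet E → volume E < ∞ → ∃ C : ℝ, ∀ f ∈ X.carrier,
    ∫⁻ y in E, ENNReal.ofReal |f y| ≤ ENNReal.ofReal (C * X.norm f)

/-- A saturated Banach function space: (L), (F) and (Sa). -/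
def IsSaturatedBFS (X : BanachInL0 n) : Prop :=
  X.PropL ∧ X.PropF ∧ X.PropSa

/-- A ball Banach function space: (L), (F), (BSi) and (BLI). -/
def IsBallBFS (X : BanachInL0 n) : Prop :=
  X.PropL ∧ X.PropF ∧ X.PropBSi ∧ X.PropBLI

end BanachInL0

/-- The Köthe dual of a set `S ⊆ L⁰(ℝⁿ)` of measurable functions. -/
def kotheDual {n : ℕ} (S : Set (Rn n → ℝ)) : Set (Rn n → ℝ) :=
  {g | AEMeasurable g volume ∧ ∀ f ∈ S, Integrable (fun x => f x * g x) volume}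

/-- The Köthe dual (semi)norm associated with a set `S` normed by `N : S → ℝ`. -/
def kotheDualNorm {n : ℕ} (S : Set (Rn n → ℝ)) (N : (Rn n → ℝ) → ℝ)
    (g : Rn n → ℝ) : ℝ≥0∞ :=
  ⨆ (f : Rn n → ℝ) (_ : f ∈ S ∧ N f ≤ 1), ∫⁻ x, ENNReal.ofReal |f x * g x|

/-- The Köthe dual (semi)norm associated with a set `S` normed by `N : S → ℝ≥0∞`. -/
def kotheDualNormE {n : ℕ} (S : Set (Rn n → ℝ)) (N : (Rn n → ℝ) → ℝ≥0∞)
    (g : Rn n → ℝ) : ℝ≥0∞ :=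
  ⨆ (f : Rn n → ℝ) (_ : f ∈ S ∧ N f ≤ 1), ∫⁻ x, ENNReal.ofReal |f x * g x|

/-- The Hardy–Littlewood maximal operator on `ℝⁿ`. -/
def hlMaximal {n : ℕ} (f : Rn n → ℝ) (x : Rn n) : ℝ≥0∞ :=
  ⨆ (c : Rn n) (r : ℝ) (_ : x ∈ Metric.ball c r),
    (volume (Metric.ball c r))⁻¹ * ∫⁻ y in Metric.ball c r, ENNReal.ofReal |f y|


/-- If a nonnegative real sequence converges, so do the infima of its tails. -/
lemma tendsto_iInf_tail_aux {a : ℕ → ℝ} {l : ℝ} (h0 : ∀ k, 0 ≤ a k)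
    (h : Tendsto a atTop (nhds l)) :
    Tendsto (fun m => ⨅ k, a (m + k)) atTop (nhds l) := by
  have hbdd : ∀ m : ℕ, BddBelow (Set.range fun k => a (m + k)) := fun m =>
    ⟨0, by rintro x ⟨k, rfl⟩; exact h0 _⟩
  rw [Metric.tendsto_atTop] at h ⊢
  intro ε hε
  obtain ⟨N, hN⟩ := h (ε / 2) (by positivity)
  refine ⟨N, fun m hm => ?_⟩
  have h1 : (⨅ k, a (m + k)) ≤ a m := by simpa using ciInf_le (hbdd m) 0
  have h2 : l - ε / 2 ≤ ⨅ k, a (m + k) := by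
    refine le_ciInf fun k => ?_
    have hk := hN (m + k) (le_trans hm (Nat.le_add_right _ _))
    rw [Real.dist_eq, abs_lt] at hk
    linarith [hk.1]
  have h3 : a m ≤ l + ε / 2 := by
    have hk := hN m hm
    rw [Real.dist_eq, abs_lt] at hk
    linarith [hk.2]
  rw [Real.dist_eq, abs_lt]
  constructor <;> linarith

set_option maxHeartbeats 4000000 in
/-- **Translation boundedness from Young's inequality.**
If `X` is a ball Banach function space on `ℝⁿ`, `f ∈ X`, and Young's inequality
`‖f*g‖_X ≤ C‖f‖_X ‖g‖_{L¹}` holds for all `g ∈ L¹(ℝⁿ)`, then the translates of `f`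
belong to `X` with norms uniformly controlled by `‖f‖_X`. -/
theorem translation_bounded_of_young {n : ℕ} (X : BanachInL0 n)
    (hX : X.IsBallBFS) (f : Rn n → ℝ) (hf : f ∈ X.carrier)
    (hY : ∃ C : ℝ, 0 < C ∧ ∀ g : Rn n → ℝ, Integrable g volume →
      (fun x => ∫ y, f (x - y) * g y) ∈ X.carrier ∧
      X.norm (fun x => ∫ y, f (x - y) * g y) ≤ C * X.norm f * ∫ y, |g y|) :
    ∃ C' : ℝ, 0 < C' ∧ ∀ z : Rn n,
      (fun x => f (x - z)) ∈ X.carrier ∧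
      X.norm (fun x => f (x - z)) ≤ C' * X.norm f := by
  obtain ⟨C, hC, hY⟩ := hY
  obtain ⟨hL, hFat, _hBSi, hBLI⟩ := hX
  have hfm : AEMeasurable f volume := X.aemeasurable hf
  -- `f` is locally integrable.
  have hfl : LocallyIntegrable f volume := by
    intro x
    obtain ⟨CB, hCB⟩ := hBLI x 1 one_pos
    refine ⟨Metric.ball x 1, Metric.ball_mem_nhds x one_pos,
      hfm.aestronglyMeasurable.restrict, ?_⟩
    have hle := hCB f hf
    have : ∫⁻ y in Metric.ball x 1, ‖f y‖ₑ ∂volume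
        = ∫⁻ y in Metric.ball x 1, ENNReal.ofReal |f y| ∂volume := by
      refine lintegral_congr fun y => ?_
      rw [← ofReal_norm_eq_enorm, Real.norm_eq_abs]
    rw [HasFiniteIntegral, this]
    exact lt_of_le_of_lt hle ENNReal.ofReal_lt_top
  refine ⟨C, hC, fun z => ?_⟩
  -- the translate is a.e. measurable
  have hmpz : MeasurePreserving (fun x : Rn n => x - z) volume volume :=
    measurePreserving_sub_right volume z
  have htrm : AEMeasurable (fun x => f (x - z)) volume :=
    hfm.comp_quasiMeasurePreserving hmpz.quasiMeasurePreserving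
  -- radii and normalized indicators of closed balls around `z`
  set r : ℕ → ℝ := fun k => 1 / ((k : ℝ) + 1) with hrdef
  have hrpos : ∀ k, 0 < r k := fun k => by positivity
  have hvolpos : ∀ k, 0 < volume (Metric.closedBall z (r k)) := fun k =>
    Metric.measure_closedBall_pos volume z (hrpos k)
  have hvolfin : ∀ k, volume (Metric.closedBall z (r k)) < ∞ := fun k =>
    measure_closedBall_lt_top
  set c : ℕ → ℝ := fun k => ((volume (Metric.closedBall z (r k))).toReal)⁻¹ with hcdef
  have hcpos : ∀ k, 0 < c k := fun k => by
    have := ENNReal.toReal_pos (hvolpos k).ne' (hvolfin k).ne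
    positivity
  set g : ℕ → Rn n → ℝ :=
    fun k => (Metric.closedBall z (r k)).indicator (fun _ => c k) with hgdef
  have hgint : ∀ k, Integrable (g k) volume := fun k => by
    rw [hgdef, integrable_indicator_iff measurableSet_closedBall]
    exact integrableOn_const (hvolfin k).ne
  have hgL1 : ∀ k, (∫ y, |g k y|) = 1 := by
    intro k
    have habs : (fun y => |g k y|)
        = (Metric.closedBall z (r k)).indicator (fun _ => |c k|) := by
      funext y
      by_cases hy : y ∈ Metric.closedBall z (r k) <;>
        simp [hgdef, Set.indicator_apply, hy]
    rw [habs, integral_indicator_const _ measurableSet_closedBall,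
      abs_of_pos (hcpos k), smul_eq_mul, hcdef]
    exact mul_inv_cancel₀ (ENNReal.toReal_pos (hvolpos k).ne' (hvolfin k).ne).ne'
  -- the convolutions
  set F : ℕ → Rn n → ℝ := fun k x => ∫ y, f (x - y) * g k y with hFdef
  have hFmem : ∀ k, F k ∈ X.carrier := fun k => (hY (g k) (hgint k)).1
  have hFnorm : ∀ k, X.norm (F k) ≤ C * X.norm f := fun k => by
    have h := (hY (g k) (hgint k)).2
    rw [hgL1 k, mul_one] at h
    exact h
  -- each convolution is an average over a translated closed ball
  have hFav : ∀ k x, F k x = ⨍ u in Metric.closedBall (x - z) (r k), f u := by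
    intro k x
    have hind : (fun y => f (x - y) * g k y)
        = (Metric.closedBall z (r k)).indicator (fun y => f (x - y) * c k) := by
      funext y
      by_cases hy : y ∈ Metric.closedBall z (r k) <;>
        simp [hgdef, Set.indicator_apply, hy]
    have hemb : MeasurableEmbedding (fun y : Rn n => x - y) :=
      (MeasurableEquiv.subLeft x).measurableEmbedding
    have hmp : MeasurePreserving (fun y : Rn n => x - y) volume volume :=
      Measure.measurePreserving_sub_left volume x
    have hpre : (fun y : Rn n => x - y) ⁻¹' Metric.closedBall (x - z) (r k)
        = Metric.closedBall z (r k) := by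
      ext y
      simp only [Set.mem_preimage, Metric.mem_closedBall, dist_eq_norm]
      rw [show x - y - (x - z) = z - y by abel, norm_sub_rev]
    have hset : ∫ y in Metric.closedBall z (r k), f (x - y) ∂volume
        = ∫ u in Metric.closedBall (x - z) (r k), f u ∂volume := by
      rw [← hpre]
      exact hmp.setIntegral_preimage_emb hemb f _
    have hvol_eq : volume (Metric.closedBall (x - z) (r k))
        = volume (Metric.closedBall z (r k)) := by
      have h1 : Metric.closedBall (x - z) (r k)
          = (fun u : Rn n => u - (x - z - z)) ⁻¹' Metric.closedBall z (r k) := by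
        ext u
        simp only [Set.mem_preimage, Metric.mem_closedBall, dist_eq_norm]
        rw [show u - (x - z - z) - z = u - (x - z) by abel]
      rw [h1, (measurePreserving_sub_right volume (x - z - z)).measure_preimage
        measurableSet_closedBall.nullMeasurableSet]
    rw [hFdef]
    simp only
    rw [hind, integral_indicator measurableSet_closedBall, integral_mul_const, hset,
      setAverage_eq, measureReal_def, hvol_eq, smul_eq_mul, mul_comm]
  -- a.e. convergence of the convolutions to the translate
  have haeavg : ∀ᵐ w ∂(volume : Measure (Rn n)),
      Tendsto (fun k => ⨍ u in Metric.closedBall w (r k), f u) atTop (nhds (f w)) := by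
    have hbes := IsUnifLocDoublingMeasure.ae_tendsto_average
      (μ := (volume : Measure (Rn n))) hfl 1
    filter_upwards [hbes] with w hw
    have hr0 : Tendsto r atTop (nhdsWithin 0 (Set.Ioi 0)) := by
      refine tendsto_nhdsWithin_of_tendsto_nhds_of_eventually_within _ ?_ ?_
      · exact tendsto_one_div_add_atTop_nhds_zero_nat
      · exact Filter.Eventually.of_forall fun k => hrpos k
    exact hw (fun _ => w) r hr0
      (Filter.Eventually.of_forall fun j =>
        Metric.mem_closedBall_self (by positivity))
  have hae : ∀ᵐ x ∂(volume : Measure (Rn n)),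
      Tendsto (fun k => F k x) atTop (nhds (f (x - z))) := by
    have := hmpz.quasiMeasurePreserving.ae haeavg
    filter_upwards [this] with x hx
    have : (fun k => F k x) = fun k => ⨍ u in Metric.closedBall (x - z) (r k), f u := by
      funext k; exact hFav k x
    rw [this]
    exact hx
  -- the tail infima
  set h : ℕ → Rn n → ℝ := fun m x => ⨅ k, |F (m + k) x| with hhdef
  have hFmeas : ∀ k, AEMeasurable (F k) volume := fun k => X.aemeasurable (hFmem k)
  have hhmeas : ∀ m, AEMeasurable (h m) volume := fun m =>
    AEMeasurable.iInf fun k => continuous_abs.measurable.comp_aemeasurable (hFmeas (m + k))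
  have hbddb : ∀ m x, BddBelow (Set.range fun k => |F (m + k) x|) := fun m x =>
    ⟨0, by rintro _ ⟨k, rfl⟩; exact abs_nonneg _⟩
  have hh0 : ∀ m x, 0 ≤ h m x := fun m x => le_ciInf fun k => abs_nonneg _
  have hhle : ∀ m x, h m x ≤ |F m x| := fun m x => by
    simpa using ciInf_le (hbddb m x) 0
  have hhmem : ∀ m, h m ∈ X.carrier ∧ X.norm (h m) ≤ X.norm (F m) := fun m =>
    hL (F m) (h m) (hFmem m) (hhmeas m)
      (Filter.Eventually.of_forall fun x => by
        rw [abs_of_nonneg (hh0 m x)]; exact hhle m x)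
  have hhnorm : ∀ m, X.norm (h m) ≤ C * X.norm f := fun m =>
    le_trans (hhmem m).2 (hFnorm m)
  -- Fatou
  have habs : (fun x => |f (x - z)|) ∈ X.carrier ∧
      X.norm (fun x => |f (x - z)|) = ⨆ m, X.norm (h m) := by
    refine hFat h (fun x => |f (x - z)|) (fun m => (hhmem m).1) (continuous_abs.measurable.comp_aemeasurable htrm) ?_ ?_
    · filter_upwards [hae] with x hx
      refine ⟨fun m => hh0 m x, ?_, ?_⟩
      · intro m m' hmm'
        refine le_ciInf fun k => ?_
        have hidx : m + (m' - m + k) = m' + k := by omega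
        calc h m x ≤ |F (m + (m' - m + k)) x| := ciInf_le (hbddb m x) _
          _ = |F (m' + k) x| := by rw [hidx]
      · have habs_t : Tendsto (fun k => |F k x|) atTop (nhds |f (x - z)|) :=
          (continuous_abs.tendsto _).comp hx
        have ht2 : Tendsto (fun m => ⨅ k, |F (m + k) x|) atTop (nhds |f (x - z)|) :=
          tendsto_iInf_tail_aux (a := fun k => |F k x|) (fun k => abs_nonneg _) habs_t
        simp only [hhdef]
        exact ht2
    · exact ⟨C * X.norm f, by rintro _ ⟨m, rfl⟩; exact hhnorm m⟩
  have hsup : X.norm (fun x => |f (x - z)|) ≤ C * X.norm f := by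
    rw [habs.2]
    exact ciSup_le fun m => hhnorm m
  have hfin := hL (fun x => |f (x - z)|) (fun x => f (x - z)) habs.1 htrm
    (Filter.Eventually.of_forall fun x => by rw [abs_abs])
  exact ⟨hfin.1, hfin.2.trans hsup⟩

end
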